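/- Let Z : [0,∞) → [0,∞) be nondecreasing and continuous with Z(0) = 0. Then for every j ≥ 1, the j-fold Lebesgue–Stieltjes convolution Z^{*(j)}(u) = ∫_{[0,u]} Z(u−y) dZ^{*(j−1)}(y) is continuous on [0,∞), and if additionally functions c_n ↑ ∞ and nondecreasing X_n satisfy X_n(u)/c_n → Z(u) uniformly on compacts, then X_n^{*(j)}(u)/c_n^j → Z^{*(j)}(u) uniformly on compacts for each j. -/

import Mathlib

open MeasureTheory Set Filter Topology
open scoped ENNReal

/-- Convolution of two (Borel) measures on `ℝ`. -/
noncomputable def mconv (μ ν : MeasureTheory.Measure ℝ) : MeasureTheory.Measure ℝ :=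
  MeasureTheory.Measure.map (fun p : ℝ × ℝ => p.1 + p.2) (μ.prod ν)

/-- `j`-fold convolution power of a measure on `ℝ`. -/
noncomputable def mconvPow (μ : MeasureTheory.Measure ℝ) : ℕ → MeasureTheory.Measure ℝ
  | 0 => MeasureTheory.Measure.dirac 0
  | 1 => μ
  | n + 2 => mconv μ (mconvPow μ (n + 1))

/-- The `j`-fold Lebesgue–Stieltjes convolution of the nondecreasing right-continuous
function `f` (vanishing at `0⁻`) represented by the measure `μ`, i.e. `f t = μ (Iic t)`. -/
noncomputable def convFun (μ : MeasureTheory.Measure ℝ) (j : ℕ) (t : ℝ) : ℝ :=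
  ((mconvPow μ j) (Set.Iic t)).toReal

lemma sfin_aux (m : Measure ℝ) (h : ∀ t : ℝ, m (Set.Iic t) < ⊤) : SigmaFinite m := by
  refine ⟨⟨⟨fun n => Iic (n : ℝ), fun _ => trivial, fun n => h n, ?_⟩⟩⟩
  ext x
  simp only [mem_iUnion, mem_Iic, mem_univ, iff_true]
  obtain ⟨n, hn⟩ := exists_nat_ge x
  exact ⟨n, hn⟩

lemma mconv_apply (α β : Measure ℝ) (hα : ∀ t : ℝ, α (Set.Iic t) < ⊤)
    (hβ : ∀ t : ℝ, β (Set.Iic t) < ⊤) (t : ℝ) :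
    mconv α β (Set.Iic t) = ∫⁻ y, α (Set.Iic (t - y)) ∂β := by
  haveI := sfin_aux α hα
  haveI := sfin_aux β hβ
  rw [mconv, Measure.map_apply (by fun_prop) measurableSet_Iic]
  have hms : MeasurableSet {p : ℝ × ℝ | p.1 + p.2 ≤ t} :=
    measurableSet_le (by fun_prop) measurable_const
  have h1 : (fun p : ℝ × ℝ => p.1 + p.2) ⁻¹' Set.Iic t = {p : ℝ × ℝ | p.1 + p.2 ≤ t} := rfl
  rw [h1, Measure.prod_apply_symm hms]
  congr 1
  ext y
  congr 1
  ext x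
  simp [sub_le_iff_le_add, le_sub_iff_add_le]

lemma mconv_supp (α β : Measure ℝ) (hα : α (Set.Iio 0) = 0) (hβ : β (Set.Iio 0) = 0)
    (hαf : ∀ t : ℝ, α (Set.Iic t) < ⊤) (hβf : ∀ t : ℝ, β (Set.Iic t) < ⊤) :
    mconv α β (Set.Iio 0) = 0 := by
  haveI := sfin_aux α hαf
  haveI := sfin_aux β hβf
  rw [mconv, Measure.map_apply (by fun_prop) measurableSet_Iio]
  have hsub : (fun p : ℝ × ℝ => p.1 + p.2) ⁻¹' Set.Iio 0 ⊆
      (Set.Iio 0 ×ˢ Set.univ) ∪ (Set.univ ×ˢ Set.Iio 0) := by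
    rintro ⟨x, y⟩ h
    simp only [mem_preimage, mem_Iio] at h
    by_contra hc
    simp only [mem_union, mem_prod, mem_univ, mem_Iio, and_true, true_and, not_or, not_lt] at hc
    linarith [hc.1, hc.2]
  refine le_antisymm ?_ (zero_le)
  calc α.prod β ((fun p : ℝ × ℝ => p.1 + p.2) ⁻¹' Set.Iio 0)
      ≤ α.prod β ((Set.Iio 0 ×ˢ Set.univ) ∪ (Set.univ ×ˢ Set.Iio 0)) := measure_mono hsub
    _ ≤ α.prod β (Set.Iio 0 ×ˢ Set.univ) + α.prod β (Set.univ ×ˢ Set.Iio 0) := measure_union_le _ _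
    _ = 0 := by rw [Measure.prod_prod, Measure.prod_prod, hα, hβ]; simp

lemma mconv_fin (α β : Measure ℝ) (hαs : α (Set.Iio 0) = 0) (hβs : β (Set.Iio 0) = 0)
    (hα : ∀ t : ℝ, α (Set.Iic t) < ⊤) (hβ : ∀ t : ℝ, β (Set.Iic t) < ⊤) (t : ℝ) :
    mconv α β (Set.Iic t) < ⊤ := by
  rw [mconv_apply α β hα hβ]
  haveI := sfin_aux β hβ
  have hbound : ∀ᵐ y ∂β, α (Set.Iic (t - y)) ≤
      (Set.Iic t).indicator (fun _ => α (Set.Iic t)) y := by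
    have h0 : ∀ᵐ y ∂β, (0:ℝ) ≤ y := by
      rw [ae_iff]
      convert hβs using 2
      ext y; simp
    filter_upwards [h0] with y hy
    by_cases hyt : y ≤ t
    · rw [indicator_of_mem (by exact hyt)]
      exact measure_mono (Iic_subset_Iic.2 (by linarith))
    · rw [indicator_of_notMem (by simpa using hyt)]
      have : Set.Iic (t - y) ⊆ Set.Iio 0 := fun z hz => by
        simp only [mem_Iic] at hz; simp only [mem_Iio]; push_neg at hyt; linarith
      simp [measure_mono_null this hαs]
  calc ∫⁻ y, α (Set.Iic (t - y)) ∂β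
      ≤ ∫⁻ y, (Set.Iic t).indicator (fun _ => α (Set.Iic t)) y ∂β := lintegral_mono_ae hbound
    _ = α (Set.Iic t) * β (Set.Iic t) := by
        rw [lintegral_indicator measurableSet_Iic, setLIntegral_const]
    _ < ⊤ := ENNReal.mul_lt_top (hα t) (hβ t)

lemma mconvPow_succ (m : Measure ℝ) (j : ℕ) (hj : 1 ≤ j) :
    mconvPow m (j + 1) = mconv m (mconvPow m j) := by
  match j, hj with
  | (n+1), _ => rfl

lemma mconv_smul_left (α β : Measure ℝ) (a : ℝ≥0∞)
    (hβ : ∀ t : ℝ, β (Set.Iic t) < ⊤) :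
    mconv (a • α) β = a • mconv α β := by
  haveI := sfin_aux β hβ
  have h : (a • α).prod β = a • (α.prod β) := by
    ext s hs
    rw [Measure.prod_apply hs, Measure.smul_apply, Measure.prod_apply hs,
      lintegral_smul_measure, smul_eq_mul]
  rw [mconv, h, Measure.map_smul, mconv]

lemma mconv_smul_right (α β : Measure ℝ) (a : ℝ≥0∞) (ha : a ≠ ⊤)
    (hβ : ∀ t : ℝ, β (Set.Iic t) < ⊤) :
    mconv α (a • β) = a • mconv α β := by
  haveI := sfin_aux β hβ
  haveI : SigmaFinite (a • β) := sfin_aux _ (fun t => by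
    rw [Measure.smul_apply, smul_eq_mul]
    exact ENNReal.mul_lt_top ha.lt_top (hβ t))
  have h : α.prod (a • β) = a • (α.prod β) := by
    ext s hs
    rw [Measure.prod_apply hs, Measure.smul_apply, Measure.prod_apply hs, smul_eq_mul,
      ← lintegral_const_mul' _ _ ha]
    simp only [Measure.smul_apply, smul_eq_mul]
  rw [mconv, h, Measure.map_smul, mconv]

lemma mconvPow_smul (ν : Measure ℝ) (a : ℝ≥0∞) (ha : a ≠ ⊤)
    (hfin : ∀ t : ℝ, ν (Set.Iic t) < ⊤)
    (hpowfin : ∀ j : ℕ, 1 ≤ j → ∀ t : ℝ, mconvPow ν j (Set.Iic t) < ⊤) :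
    ∀ j : ℕ, 1 ≤ j → mconvPow (a • ν) j = a ^ j • mconvPow ν j := by
  refine Nat.le_induction ?_ ?_
  · simp [mconvPow, pow_one]
  · intro j hj ih
    rw [mconvPow_succ _ j hj, mconvPow_succ _ j hj, ih,
      mconv_smul_right _ _ _ (by simp [ENNReal.pow_ne_top ha]) (hpowfin j hj),
      mconv_smul_left _ _ _ (hpowfin j hj),
      smul_smul, ← pow_succ]

lemma polya_Icc (F : ℕ → ℝ → ℝ) (g : ℝ → ℝ) (hmono : ∀ n, Monotone (F n))
    (hg : Continuous g) (hpt : ∀ x, Tendsto (fun n => F n x) atTop (𝓝 (g x)))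
    (a b : ℝ) : TendstoUniformlyOn F g atTop (Set.Icc a b) := by
  rw [Metric.tendstoUniformlyOn_iff]
  intro ε hε
  rcases lt_or_ge b a with hba | hab
  · filter_upwards with n x hx
    exact absurd hx (by simp [Set.Icc_eq_empty_of_lt hba])
  have hUC : UniformContinuousOn g (Set.Icc a b) :=
    isCompact_Icc.uniformContinuousOn_of_continuous hg.continuousOn
  rw [Metric.uniformContinuousOn_iff] at hUC
  obtain ⟨δ, hδ, hδ'⟩ := hUC (ε/3) (by linarith)
  obtain ⟨k₀, hk₀⟩ := exists_nat_ge ((b - a)/δ)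
  set k := k₀ + 1 with hk
  have hkpos : (0:ℝ) < k := by positivity
  set h := (b - a)/k with hh
  have hhnn : 0 ≤ h := div_nonneg (by linarith) hkpos.le
  have hhδ : h < δ := by
    rw [hh, div_lt_iff₀ hkpos]
    have h1 : (b - a)/δ < (k:ℝ) := lt_of_le_of_lt hk₀ (by exact_mod_cast Nat.lt_succ_self k₀)
    calc b - a = ((b-a)/δ) * δ := by field_simp
      _ < k * δ := mul_lt_mul_of_pos_right h1 hδ
      _ = δ * k := mul_comm _ _
  set p : ℕ → ℝ := fun i => a + i * h with hp
  have hpk : p k = b := by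
    simp only [hp, hh]; field_simp; ring
  have hpmem : ∀ i : ℕ, i ≤ k → p i ∈ Set.Icc a b := by
    intro i hi
    have hik : (i:ℝ) ≤ (k:ℝ) := by exact_mod_cast hi
    constructor
    · simp only [hp]; nlinarith [Nat.cast_nonneg (α := ℝ) i]
    · simp only [hp, hh]
      rw [div_eq_iff (ne_of_gt hkpos)] at *
      nlinarith [mul_le_mul_of_nonneg_right hik hhnn]
  have hev : ∀ᶠ n in atTop, ∀ i ∈ Finset.range (k+1), dist (F n (p i)) (g (p i)) < ε/3 := by
    rw [eventually_all_finset]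
    intro i _
    have := (hpt (p i)).eventually (Metric.ball_mem_nhds (g (p i)) (by linarith : (0:ℝ) < ε/3))
    filter_upwards [this] with n hn
    simpa [Metric.mem_ball, dist_comm] using hn
  filter_upwards [hev] with n hn x hx
  by_cases hh0 : h = 0
  · have hba' : b = a := by
      rw [hh, div_eq_zero_iff] at hh0
      rcases hh0 with h1 | h1
      · linarith
      · exact absurd h1 (ne_of_gt hkpos)
    have hxa : x = a := le_antisymm (hba' ▸ hx.2) hx.1
    have h0 := hn 0 (by simp)
    have hpa : p 0 = a := by simp [hp]
    rw [hxa, ← hpa, dist_comm]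
    linarith
  have hhpos : 0 < h := lt_of_le_of_ne hhnn (Ne.symm hh0)
  set i := min (⌊(x - a)/h⌋₊) (k - 1) with hi
  have hik1 : i + 1 ≤ k := by
    have : i ≤ k - 1 := min_le_right _ _
    omega
  have hpi_le : p i ≤ x := by
    have h1 : (i:ℝ) ≤ (x - a)/h := by
      calc (i:ℝ) ≤ (⌊(x - a)/h⌋₊ : ℝ) := by exact_mod_cast min_le_left _ _
        _ ≤ (x - a)/h := Nat.floor_le (div_nonneg (by linarith [hx.1]) hhpos.le)
    have h2 : (i:ℝ) * h ≤ x - a := (le_div_iff₀ hhpos).1 h1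
    simp only [hp]
    linarith
  have hx_le : x ≤ p (i+1) := by
    rcases le_or_gt (⌊(x - a)/h⌋₊) (k-1) with hcase | hcase
    · have hieq : i = ⌊(x - a)/h⌋₊ := min_eq_left hcase
      have h2 : (x - a)/h < (⌊(x - a)/h⌋₊ : ℝ) + 1 := Nat.lt_floor_add_one _
      have h3 : x - a < ((⌊(x - a)/h⌋₊ : ℝ) + 1) * h := (div_lt_iff₀ hhpos).1 h2
      simp only [hp]
      push_cast [hieq]
      linarith
    · have hieq : i = k - 1 := min_eq_right (le_of_lt hcase)
      have : i + 1 = k := by omega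
      rw [this, hpk]
      exact hx.2
  have hpiIcc : p i ∈ Set.Icc a b := hpmem i (by omega)
  have hpi1Icc : p (i+1) ∈ Set.Icc a b := hpmem (i+1) hik1
  have hstep : p (i+1) - p i = h := by
    simp only [hp]; push_cast; ring
  have hd1 : dist x (p i) < δ := by
    rw [Real.dist_eq, abs_of_nonneg (by linarith)]
    linarith
  have hd2 : dist x (p (i+1)) < δ := by
    rw [Real.dist_eq, abs_of_nonpos (by linarith)]
    linarith
  have hgpi : dist (g x) (g (p i)) < ε/3 := hδ' x hx (p i) hpiIcc hd1
  have hgpi1 : dist (g x) (g (p (i+1))) < ε/3 := hδ' x hx (p (i+1)) hpi1Icc hd2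
  have hFi := hn i (Finset.mem_range.2 (by omega))
  have hFi1 := hn (i+1) (Finset.mem_range.2 (by omega))
  rw [Real.dist_eq, abs_lt] at hgpi hgpi1 hFi hFi1 ⊢
  have hm1 : F n (p i) ≤ F n x := hmono n hpi_le
  have hm2 : F n x ≤ F n (p (i+1)) := hmono n hx_le
  constructor <;> [nlinarith; nlinarith]

lemma polya_loc (F : ℕ → ℝ → ℝ) (g : ℝ → ℝ) (hmono : ∀ n, Monotone (F n))
    (hg : Continuous g) (hpt : ∀ x, Tendsto (fun n => F n x) atTop (𝓝 (g x))) :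
    TendstoLocallyUniformly F g atTop := by
  intro u hu x
  refine ⟨Set.Icc (x - 1) (x + 1), Icc_mem_nhds (by linarith) (by linarith), ?_⟩
  exact polya_Icc F g hmono hg hpt (x-1) (x+1) u hu

lemma riemann_up (f : ℝ → ℝ) (hfa : Antitone f) (t : ℝ) (hfz : ∀ y, t ≤ y → f y = 0)
    (k : ℕ) (p : ℕ → ℝ)
    (hcover : ∀ y, 0 < y → y ≤ t → ∃ i, i < k ∧ p i < y ∧ y ≤ p (i+1))
    (m : Measure ℝ) (hms : m (Set.Iio 0) = 0) :
    ∫⁻ y, ENNReal.ofReal (f y) ∂m ≤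
      ∑ i ∈ Finset.range k, ENNReal.ofReal (f (p i)) * m (Set.Ioc (p i) (p (i+1)))
        + ENNReal.ofReal (f 0) * m (Set.Iic 0) := by
  set gU : ℝ → ℝ≥0∞ := fun y =>
    (∑ i ∈ Finset.range k, (Set.Ioc (p i) (p (i+1))).indicator
        (fun _ => ENNReal.ofReal (f (p i))) y)
      + (Set.Iic 0).indicator (fun _ => ENNReal.ofReal (f 0)) y with hgU
  have hae : ∀ᵐ y ∂m, (0:ℝ) ≤ y := by
    rw [ae_iff]
    convert hms using 2
    ext y; simp
  have hbound : ∀ᵐ y ∂m, ENNReal.ofReal (f y) ≤ gU y := by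
    filter_upwards [hae] with y hy
    rcases eq_or_lt_of_le hy with hy0 | hy0
    · subst hy0
      rw [hgU]
      simp only []
      have hmem0 : (0:ℝ) ∈ Set.Iic (0:ℝ) := by simp
      rw [Set.indicator_of_mem hmem0]
      exact le_add_left (le_refl _)
    · by_cases hyt : y ≤ t
      · obtain ⟨i, hik, hpi, hpi1⟩ := hcover y hy0 hyt
        have hmem : y ∈ Set.Ioc (p i) (p (i+1)) := ⟨hpi, hpi1⟩
        have h1 : ENNReal.ofReal (f y) ≤ ENNReal.ofReal (f (p i)) :=
          ENNReal.ofReal_le_ofReal (hfa hpi.le)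
        have h2 : ENNReal.ofReal (f (p i)) ≤
            ∑ i' ∈ Finset.range k, (Set.Ioc (p i') (p (i'+1))).indicator
              (fun _ => ENNReal.ofReal (f (p i'))) y := by
          have := Finset.single_le_sum (f := fun i' => (Set.Ioc (p i') (p (i'+1))).indicator
              (fun _ => ENNReal.ofReal (f (p i'))) y)
            (fun _ _ => zero_le) (Finset.mem_range.2 hik)
          simpa [Set.indicator_of_mem hmem] using this
        exact le_trans (le_trans h1 h2) le_self_add
      · push_neg at hyt
        rw [hfz y hyt.le]
        simp
  calc ∫⁻ y, ENNReal.ofReal (f y) ∂m ≤ ∫⁻ y, gU y ∂m := lintegral_mono_ae hbound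
    _ = _ := by
        rw [hgU]
        rw [lintegral_add_right _ (measurable_const.indicator measurableSet_Iic),
          lintegral_finset_sum _ (fun i _ => measurable_const.indicator measurableSet_Ioc),
          lintegral_indicator measurableSet_Iic, setLIntegral_const]
        congr 1
        refine Finset.sum_congr rfl (fun i _ => ?_)
        rw [lintegral_indicator measurableSet_Ioc, setLIntegral_const]

lemma riemann_down (f : ℝ → ℝ) (hfa : Antitone f)
    (k : ℕ) (p : ℕ → ℝ) (hpnn : ∀ i, 0 ≤ p i) (hpm : Monotone p)
    (m : Measure ℝ) :
    ∑ i ∈ Finset.range k, ENNReal.ofReal (f (p (i+1))) * m (Set.Ioc (p i) (p (i+1)))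
        + ENNReal.ofReal (f 0) * m (Set.Iic 0) ≤
      ∫⁻ y, ENNReal.ofReal (f y) ∂m := by
  set gL : ℝ → ℝ≥0∞ := fun y =>
    (∑ i ∈ Finset.range k, (Set.Ioc (p i) (p (i+1))).indicator
        (fun _ => ENNReal.ofReal (f (p (i+1)))) y)
      + (Set.Iic 0).indicator (fun _ => ENNReal.ofReal (f 0)) y with hgL
  have hbound : ∀ y, gL y ≤ ENNReal.ofReal (f y) := by
    intro y
    rcases le_or_gt y 0 with hy | hy
    · have hz : ∀ i ∈ Finset.range k, (Set.Ioc (p i) (p (i+1))).indicator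
          (fun _ => ENNReal.ofReal (f (p (i+1)))) y = 0 := by
        intro i _
        refine Set.indicator_of_notMem (fun hmem => ?_) _
        exact absurd hmem.1 (not_lt.2 (le_trans hy (hpnn i)))
      rw [hgL]
      simp only [Finset.sum_eq_zero hz, zero_add,
        Set.indicator_of_mem (Set.mem_Iic.2 hy)]
      exact ENNReal.ofReal_le_ofReal (hfa hy)
    · have hIic : (Set.Iic (0:ℝ)).indicator (fun _ => ENNReal.ofReal (f 0)) y = 0 :=
        Set.indicator_of_notMem (by simpa using hy) _
      rw [hgL]
      simp only [hIic, add_zero]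
      by_cases hex : ∃ i ∈ Finset.range k, y ∈ Set.Ioc (p i) (p (i+1))
      · obtain ⟨i₀, hi₀k, hi₀⟩ := hex
        rw [Finset.sum_eq_single_of_mem i₀ hi₀k (fun j _ hj => ?_)]
        · rw [Set.indicator_of_mem hi₀]
          exact ENNReal.ofReal_le_ofReal (hfa hi₀.2)
        · refine Set.indicator_of_notMem (fun hmem => ?_) _
          rcases lt_or_gt_of_ne hj with hlt | hlt
          · exact absurd (lt_of_le_of_lt (le_trans hmem.2 (hpm (by omega : j + 1 ≤ i₀))) hi₀.1)
              (lt_irrefl y)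
          · exact absurd (lt_of_le_of_lt (le_trans hi₀.2 (hpm (by omega : i₀ + 1 ≤ j))) hmem.1)
              (lt_irrefl y)
      · push_neg at hex
        rw [Finset.sum_eq_zero (fun i hi => Set.indicator_of_notMem (hex i hi) _)]
        exact zero_le
  calc _ = ∫⁻ y, gL y ∂m := by
        rw [hgL]
        rw [lintegral_add_right _ (measurable_const.indicator measurableSet_Iic),
          lintegral_finset_sum _ (fun i _ => measurable_const.indicator measurableSet_Ioc),
          lintegral_indicator measurableSet_Iic, setLIntegral_const]
        congr 1
        refine Finset.sum_congr rfl (fun i _ => ?_)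
        rw [lintegral_indicator measurableSet_Ioc, setLIntegral_const]
    _ ≤ _ := lintegral_mono hbound

lemma mIoc_toReal (m : Measure ℝ) (hmf : ∀ s : ℝ, m (Set.Iic s) < ⊤) (a b : ℝ) (hab : a ≤ b) :
    (m (Set.Ioc a b)).toReal = (m (Set.Iic b)).toReal - (m (Set.Iic a)).toReal := by
  rw [← Set.Iic_sdiff_Iic,
    measure_diff (Set.Iic_subset_Iic.2 hab) measurableSet_Iic.nullMeasurableSet (hmf a).ne,
    ENNReal.toReal_sub_of_le (measure_mono (Set.Iic_subset_Iic.2 hab)) (hmf b).ne]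

lemma conv_integrand_tendsto
    (t : ℝ) (ht : 0 ≤ t) (f : ℝ → ℝ)
    (hfc : Continuous f) (hfa : Antitone f) (hf0 : ∀ y, 0 ≤ f y) (hfz : ∀ y, t ≤ y → f y = 0)
    (β : Measure ℝ) (βn : ℕ → Measure ℝ)
    (hβs : β (Set.Iio 0) = 0) (hβns : ∀ n, βn n (Set.Iio 0) = 0)
    (hβf : ∀ s : ℝ, β (Set.Iic s) < ⊤) (hβnf : ∀ n, ∀ s : ℝ, βn n (Set.Iic s) < ⊤)
    (hcv : ∀ s : ℝ, Tendsto (fun n => (βn n (Set.Iic s)).toReal) atTop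
      (𝓝 ((β (Set.Iic s)).toReal))) :
    Tendsto (fun n => (∫⁻ y, ENNReal.ofReal (f y) ∂(βn n)).toReal) atTop
      (𝓝 ((∫⁻ y, ENNReal.ofReal (f y) ∂β).toReal)) := by
  rw [Metric.tendsto_atTop]
  intro ε hε
  set C := (β (Set.Iic t)).toReal + 1 with hC
  have hC0 : 0 < C := by positivity
  set ε' := ε / (4 * C) with hε'
  have hε'0 : 0 < ε' := by positivity
  -- uniform continuity of f on [0, t]
  have hUC : UniformContinuousOn f (Set.Icc 0 t) :=
    isCompact_Icc.uniformContinuousOn_of_continuous hfc.continuousOn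
  rw [Metric.uniformContinuousOn_iff] at hUC
  obtain ⟨δ, hδ0, hδ⟩ := hUC ε' hε'0
  -- mesh
  set k := ⌈t/δ⌉₊ + 1 with hk
  have hkpos : (0:ℝ) < k := by positivity
  set h := t / k with hh
  have hh0 : 0 ≤ h := div_nonneg ht hkpos.le
  have hhδ : h < δ := by
    rw [hh, div_lt_iff₀ hkpos]
    have h1 : t/δ < (k:ℝ) := by
      calc t/δ ≤ (⌈t/δ⌉₊ : ℝ) := Nat.le_ceil _
        _ < k := by rw [hk]; push_cast; linarith
    calc t = (t/δ) * δ := by field_simp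
      _ < k * δ := mul_lt_mul_of_pos_right h1 hδ0
      _ = δ * k := mul_comm _ _
  set p : ℕ → ℝ := fun i => (i:ℝ) * h with hp
  have hp0 : p 0 = 0 := by simp [hp]
  have hpk : p k = t := by
    rw [hp, hh]; field_simp
  have hpm : Monotone p := fun i j hij =>
    mul_le_mul_of_nonneg_right (by exact_mod_cast hij) hh0
  have hpnn : ∀ i, 0 ≤ p i := fun i => mul_nonneg (Nat.cast_nonneg i) hh0
  have hpt : ∀ i, i ≤ k → p i ≤ t := fun i hi => hpk ▸ hpm hi
  have hosc : ∀ i, i < k → 0 ≤ f (p i) - f (p (i+1)) ∧ f (p i) - f (p (i+1)) ≤ ε' := by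
    intro i hik
    constructor
    · have := hfa (hpm (Nat.le_succ i))
      linarith
    · have hmem1 : p i ∈ Set.Icc 0 t := ⟨hpnn i, hpt i hik.le⟩
      have hmem2 : p (i+1) ∈ Set.Icc 0 t := ⟨hpnn (i+1), hpt (i+1) hik⟩
      have hdist : dist (p i) (p (i+1)) < δ := by
        rw [Real.dist_eq, abs_of_nonpos (by linarith [hpm (Nat.le_succ i)])]
        have : p (i+1) - p i = h := by rw [hp]; push_cast; ring
        linarith
      have := hδ (p i) hmem1 (p (i+1)) hmem2 hdist
      rw [Real.dist_eq, abs_lt] at this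
      linarith [this.1, this.2]
  have hcover : ∀ y, 0 < y → y ≤ t → ∃ i, i < k ∧ p i < y ∧ y ≤ p (i+1) := by
    intro y hy0 hyt
    have ht0 : 0 < t := lt_of_lt_of_le hy0 hyt
    have hhpos : 0 < h := div_pos ht0 hkpos
    set c := ⌈y/h⌉₊ with hc
    have hc1 : 1 ≤ c := Nat.one_le_ceil_iff.2 (div_pos hy0 hhpos)
    have hck : c ≤ k := Nat.ceil_le.2 (by
      rw [div_le_iff₀ hhpos]
      calc y ≤ t := hyt
        _ = k * h := by rw [hh]; field_simp)
    refine ⟨c - 1, by omega, ?_, ?_⟩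
    · have hlt : ((c:ℝ) - 1) < y/h := by
        have := Nat.ceil_lt_add_one (le_of_lt (div_pos hy0 hhpos))
        rw [← hc] at this
        linarith
      have hcast : ((c - 1 : ℕ) : ℝ) = (c:ℝ) - 1 := by
        push_cast [hc1]; ring
      rw [hp]
      simp only []
      rw [hcast]
      calc ((c:ℝ) - 1) * h < (y/h) * h := mul_lt_mul_of_pos_right hlt hhpos
        _ = y := by field_simp
    · have hsucc : c - 1 + 1 = c := by omega
      rw [hsucc, hp]
      simp only []
      calc y = (y/h) * h := by field_simp
        _ ≤ (c:ℝ) * h := mul_le_mul_of_nonneg_right (Nat.le_ceil _) hhpos.le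
  -- the key per-measure bounds
  have key : ∀ m : Measure ℝ, m (Set.Iio 0) = 0 → (∀ s : ℝ, m (Set.Iic s) < ⊤) →
      ((∑ i ∈ Finset.range k, f (p (i+1)) * (m (Set.Ioc (p i) (p (i+1)))).toReal)
          + f 0 * (m (Set.Iic 0)).toReal ≤ (∫⁻ y, ENNReal.ofReal (f y) ∂m).toReal) ∧
      ((∫⁻ y, ENNReal.ofReal (f y) ∂m).toReal ≤
        (∑ i ∈ Finset.range k, f (p i) * (m (Set.Ioc (p i) (p (i+1)))).toReal)
          + f 0 * (m (Set.Iic 0)).toReal) ∧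
      ((∑ i ∈ Finset.range k, f (p i) * (m (Set.Ioc (p i) (p (i+1)))).toReal)
          - (∑ i ∈ Finset.range k, f (p (i+1)) * (m (Set.Ioc (p i) (p (i+1)))).toReal)
        ≤ ε' * (m (Set.Iic t)).toReal) := by
    intro m hms hmf
    have hterm_ne : ∀ (g : ℕ → ℝ), ∀ i ∈ Finset.range k,
        ENNReal.ofReal (g i) * m (Set.Ioc (p i) (p (i+1))) ≠ ⊤ := by
      intro g i _
      exact ENNReal.mul_ne_top ENNReal.ofReal_ne_top
        (lt_of_le_of_lt (measure_mono Set.Ioc_subset_Iic_self) (hmf _)).ne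
    have hsum_ne : ∀ (g : ℕ → ℝ),
        (∑ i ∈ Finset.range k, ENNReal.ofReal (g i) * m (Set.Ioc (p i) (p (i+1)))) ≠ ⊤ := by
      intro g
      rw [← lt_top_iff_ne_top, ENNReal.sum_lt_top]
      intro i hi
      exact (hterm_ne g i hi).lt_top
    have hc_ne : ENNReal.ofReal (f 0) * m (Set.Iic 0) ≠ ⊤ :=
      ENNReal.mul_ne_top ENNReal.ofReal_ne_top (hmf 0).ne
    have htoReal : ∀ (g : ℕ → ℝ), (∀ i, 0 ≤ g i) →
        ((∑ i ∈ Finset.range k, ENNReal.ofReal (g i) * m (Set.Ioc (p i) (p (i+1))))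
          + ENNReal.ofReal (f 0) * m (Set.Iic 0)).toReal =
        (∑ i ∈ Finset.range k, g i * (m (Set.Ioc (p i) (p (i+1)))).toReal)
          + f 0 * (m (Set.Iic 0)).toReal := by
      intro g hg
      rw [ENNReal.toReal_add (hsum_ne g) hc_ne, ENNReal.toReal_sum (hterm_ne g),
        ENNReal.toReal_mul, ENNReal.toReal_ofReal (hf0 0)]
      congr 1
      refine Finset.sum_congr rfl (fun i _ => ?_)
      rw [ENNReal.toReal_mul, ENNReal.toReal_ofReal (hg i)]
    have hup := riemann_up f hfa t hfz k p hcover m hms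
    have hdown := riemann_down f hfa k p hpnn hpm m
    have hRHS_ne : ((∑ i ∈ Finset.range k, ENNReal.ofReal (f (p i)) * m (Set.Ioc (p i) (p (i+1))))
        + ENNReal.ofReal (f 0) * m (Set.Iic 0)) ≠ ⊤ :=
      ENNReal.add_ne_top.2 ⟨hsum_ne _, hc_ne⟩
    have hint_ne : (∫⁻ y, ENNReal.ofReal (f y) ∂m) ≠ ⊤ := ne_top_of_le_ne_top hRHS_ne hup
    refine ⟨?_, ?_, ?_⟩
    · have := ENNReal.toReal_mono hint_ne hdown
      rwa [htoReal _ (fun i => hf0 _)] at this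
    · have := ENNReal.toReal_mono hRHS_ne hup
      rwa [htoReal _ (fun i => hf0 _)] at this
    · have heq : (∑ i ∈ Finset.range k, f (p i) * (m (Set.Ioc (p i) (p (i+1)))).toReal)
          - (∑ i ∈ Finset.range k, f (p (i+1)) * (m (Set.Ioc (p i) (p (i+1)))).toReal)
          = ∑ i ∈ Finset.range k,
              (f (p i) - f (p (i+1))) * (m (Set.Ioc (p i) (p (i+1)))).toReal := by
        rw [← Finset.sum_sub_distrib]
        exact Finset.sum_congr rfl (fun i _ => by ring)
      rw [heq]
      have hsum_le : ∑ i ∈ Finset.range k,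
          (f (p i) - f (p (i+1))) * (m (Set.Ioc (p i) (p (i+1)))).toReal
          ≤ ∑ i ∈ Finset.range k, ε' * (m (Set.Ioc (p i) (p (i+1)))).toReal := by
        refine Finset.sum_le_sum (fun i hi => ?_)
        exact mul_le_mul_of_nonneg_right (hosc i (Finset.mem_range.1 hi)).2
          ENNReal.toReal_nonneg
      refine le_trans hsum_le ?_
      rw [← Finset.mul_sum]
      have htel : ∑ i ∈ Finset.range k, (m (Set.Ioc (p i) (p (i+1)))).toReal
          = (m (Set.Iic (p k))).toReal - (m (Set.Iic (p 0))).toReal := by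
        rw [← Finset.sum_range_sub (fun i => (m (Set.Iic (p i))).toReal)]
        exact Finset.sum_congr rfl (fun i _ => mIoc_toReal m hmf _ _ (hpm (Nat.le_succ i)))
      rw [htel, hpk]
      have : (m (Set.Iic (p 0))).toReal ≥ 0 := ENNReal.toReal_nonneg
      nlinarith [ENNReal.toReal_nonneg (a := m (Set.Iic t))]
  -- convergence of the Riemann sums
  have hIoc_cv : ∀ a b : ℝ, a ≤ b → Tendsto (fun n => (βn n (Set.Ioc a b)).toReal) atTop
      (𝓝 ((β (Set.Ioc a b)).toReal)) := by
    intro a b hab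
    have heq : (fun n => (βn n (Set.Ioc a b)).toReal)
        = fun n => (βn n (Set.Iic b)).toReal - (βn n (Set.Iic a)).toReal :=
      funext fun n => mIoc_toReal (βn n) (hβnf n) a b hab
    rw [heq, mIoc_toReal β hβf a b hab]
    exact (hcv b).sub (hcv a)
  have hUconv : Tendsto (fun n =>
      (∑ i ∈ Finset.range k, f (p i) * (βn n (Set.Ioc (p i) (p (i+1)))).toReal)
        + f 0 * (βn n (Set.Iic 0)).toReal) atTop
      (𝓝 ((∑ i ∈ Finset.range k, f (p i) * (β (Set.Ioc (p i) (p (i+1)))).toReal)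
        + f 0 * (β (Set.Iic 0)).toReal)) := by
    refine Tendsto.add ?_ ?_
    · refine tendsto_finset_sum _ (fun i _ => ?_)
      exact (hIoc_cv _ _ (hpm (Nat.le_succ i))).const_mul _
    · exact (hcv 0).const_mul _
  obtain ⟨N1, hN1⟩ := (Metric.tendsto_atTop.1 hUconv) (ε/4) (by positivity)
  obtain ⟨N2, hN2⟩ := (Metric.tendsto_atTop.1 (hcv t)) 1 one_pos
  refine ⟨max N1 N2, fun n hn => ?_⟩
  have h1 := hN1 n (le_trans (le_max_left _ _) hn)
  have h2 := hN2 n (le_trans (le_max_right _ _) hn)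
  rw [Real.dist_eq, abs_lt] at h1 h2
  have hBn : (βn n (Set.Iic t)).toReal ≤ C := by
    rw [hC]; linarith [h2.2]
  have hBle : (β (Set.Iic t)).toReal ≤ C := by
    rw [hC]; linarith [ENNReal.toReal_nonneg (a := β (Set.Iic t))]
  obtain ⟨kd1, ku1, kdiff1⟩ := key (βn n) (hβns n) (hβnf n)
  obtain ⟨kd2, ku2, kdiff2⟩ := key β hβs hβf
  have hε'C : ε' * C = ε/4 := by
    rw [hε']; field_simp
  have hε'B : ε' * (β (Set.Iic t)).toReal ≤ ε/4 := by
    rw [← hε'C]; exact mul_le_mul_of_nonneg_left hBle hε'0.le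
  have hε'Bn : ε' * (βn n (Set.Iic t)).toReal ≤ ε/4 := by
    rw [← hε'C]; exact mul_le_mul_of_nonneg_left hBn hε'0.le
  rw [Real.dist_eq, abs_lt]
  constructor
  · linarith [kd1, ku1, kdiff1, kd2, ku2, kdiff2, h1.1, h1.2, hε'B, hε'Bn]
  · linarith [kd1, ku1, kdiff1, kd2, ku2, kdiff2, h1.1, h1.2, hε'B, hε'Bn]

lemma conv_cont (α β : Measure ℝ) (hαs : α (Set.Iio 0) = 0) (hαf : ∀ s : ℝ, α (Set.Iic s) < ⊤)
    (hβs : β (Set.Iio 0) = 0) (hβf : ∀ s : ℝ, β (Set.Iic s) < ⊤)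
    (hG : Continuous fun s => (α (Set.Iic s)).toReal) :
    Continuous fun t => (mconv α β (Set.Iic t)).toReal := by
  rw [continuous_iff_continuousAt]
  intro t₀
  rw [Metric.continuousAt_iff]
  intro ε₀ hε₀
  set T := t₀ + 1 with hT
  set Cβ := (β (Set.Iic T)).toReal + 1 with hCβ
  have hCβ0 : 0 < Cβ := by positivity
  set ε := ε₀ / (2 * Cβ) with hε
  have hε0 : 0 < ε := by positivity
  -- uniform continuity of G on a large compact interval
  have hUC : UniformContinuousOn (fun s => (α (Set.Iic s)).toReal)
      (Set.Icc (t₀ - 1 - T) T) :=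
    isCompact_Icc.uniformContinuousOn_of_continuous hG.continuousOn
  rw [Metric.uniformContinuousOn_iff] at hUC
  obtain ⟨δ, hδ0, hδ⟩ := hUC ε hε0
  refine ⟨min δ 1, by positivity, fun {x} hx => ?_⟩
  rw [Real.dist_eq] at hx
  have hx1 : |x - t₀| < 1 := lt_of_lt_of_le hx (min_le_right _ _)
  have hxδ : |x - t₀| < δ := lt_of_lt_of_le hx (min_le_left _ _)
  rw [abs_lt] at hx1 hxδ
  -- main two-sided estimate
  have main : ∀ t t' : ℝ, t₀ - 1 ≤ t → t ≤ T → t₀ - 1 ≤ t' → t' ≤ T → |t - t'| < δ →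
      (mconv α β (Set.Iic t)).toReal ≤ (mconv α β (Set.Iic t')).toReal + ε * Cβ := by
    intro t t' ht1 ht2 ht1' ht2' htt
    have hae : ∀ᵐ y ∂β, (0:ℝ) ≤ y := by
      rw [ae_iff]
      convert hβs using 2
      ext y; simp
    have hbound : ∀ᵐ y ∂β, α (Set.Iic (t - y)) ≤
        α (Set.Iic (t' - y)) + (Set.Iic T).indicator (fun _ => ENNReal.ofReal ε) y := by
      filter_upwards [hae] with y hy
      by_cases hyT : y ≤ T
      · have hmem1 : t - y ∈ Set.Icc (t₀ - 1 - T) T := by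
          constructor <;> [linarith; linarith]
        have hmem2 : t' - y ∈ Set.Icc (t₀ - 1 - T) T := by
          constructor <;> [linarith; linarith]
        have hdist : dist (t - y) (t' - y) < δ := by
          rw [Real.dist_eq]
          have : t - y - (t' - y) = t - t' := by ring
          rw [this]
          exact htt
        have hGd := hδ _ hmem1 _ hmem2 hdist
        rw [Real.dist_eq, abs_lt] at hGd
        have h1 : (α (Set.Iic (t - y))).toReal ≤ (α (Set.Iic (t' - y))).toReal + ε := by
          linarith [hGd.1, hGd.2]
        calc α (Set.Iic (t - y)) = ENNReal.ofReal ((α (Set.Iic (t - y))).toReal) :=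
              (ENNReal.ofReal_toReal (hαf _).ne).symm
          _ ≤ ENNReal.ofReal ((α (Set.Iic (t' - y))).toReal + ε) :=
              ENNReal.ofReal_le_ofReal h1
          _ ≤ ENNReal.ofReal ((α (Set.Iic (t' - y))).toReal) + ENNReal.ofReal ε :=
              ENNReal.ofReal_add_le
          _ = α (Set.Iic (t' - y)) + ENNReal.ofReal ε := by
              rw [ENNReal.ofReal_toReal (hαf _).ne]
          _ = α (Set.Iic (t' - y)) + (Set.Iic T).indicator (fun _ => ENNReal.ofReal ε) y := by
              rw [Set.indicator_of_mem (Set.mem_Iic.2 hyT)]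
      · push_neg at hyT
        have hz : α (Set.Iic (t - y)) = 0 := by
          refine measure_mono_null (fun z hz => ?_) hαs
          simp only [Set.mem_Iic] at hz
          simp only [Set.mem_Iio]
          linarith
        rw [hz]
        exact zero_le
    have hle : mconv α β (Set.Iic t) ≤ mconv α β (Set.Iic t') + ENNReal.ofReal ε * β (Set.Iic T) := by
      rw [mconv_apply α β hαf hβf, mconv_apply α β hαf hβf]
      calc ∫⁻ y, α (Set.Iic (t - y)) ∂β
          ≤ ∫⁻ y, (α (Set.Iic (t' - y)) + (Set.Iic T).indicator (fun _ => ENNReal.ofReal ε) y) ∂β :=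
            lintegral_mono_ae hbound
        _ = (∫⁻ y, α (Set.Iic (t' - y)) ∂β) + ENNReal.ofReal ε * β (Set.Iic T) := by
            rw [lintegral_add_right _ (measurable_const.indicator measurableSet_Iic),
              lintegral_indicator measurableSet_Iic, setLIntegral_const]
    have hfin1 : mconv α β (Set.Iic t') ≠ ⊤ := (mconv_fin α β hαs hβs hαf hβf t').ne
    have hfin2 : ENNReal.ofReal ε * β (Set.Iic T) ≠ ⊤ :=
      ENNReal.mul_ne_top ENNReal.ofReal_ne_top (hβf T).ne
    have := ENNReal.toReal_mono (ENNReal.add_ne_top.2 ⟨hfin1, hfin2⟩) hle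
    rw [ENNReal.toReal_add hfin1 hfin2, ENNReal.toReal_mul,
      ENNReal.toReal_ofReal hε0.le] at this
    refine le_trans this ?_
    have hβT : (β (Set.Iic T)).toReal ≤ Cβ := by rw [hCβ]; linarith
    nlinarith
  have hub1 : (mconv α β (Set.Iic x)).toReal ≤ (mconv α β (Set.Iic t₀)).toReal + ε * Cβ :=
    main x t₀ (by linarith) (by linarith) (by linarith) (by linarith)
      (by rw [abs_lt]; constructor <;> linarith)
  have hub2 : (mconv α β (Set.Iic t₀)).toReal ≤ (mconv α β (Set.Iic x)).toReal + ε * Cβ :=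
    main t₀ x (by linarith) (by linarith) (by linarith) (by linarith)
      (by rw [abs_lt]; constructor <;> linarith)
  rw [Real.dist_eq, abs_lt]
  have hεC : ε * Cβ = ε₀ / 2 := by
    rw [hε]; field_simp
  clear_value ε Cβ T
  constructor <;> [linarith; linarith]

lemma conv_df_tendsto
    (α β : Measure ℝ) (αn βn : ℕ → Measure ℝ)
    (hαs : α (Set.Iio 0) = 0) (hαf : ∀ s : ℝ, α (Set.Iic s) < ⊤) (hα0 : α (Set.Iic 0) = 0)
    (hG : Continuous fun s => (α (Set.Iic s)).toReal)
    (hαns : ∀ n, αn n (Set.Iio 0) = 0) (hαnf : ∀ n, ∀ s : ℝ, αn n (Set.Iic s) < ⊤)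
    (hαcv : ∀ s : ℝ, Tendsto (fun n => (αn n (Set.Iic s)).toReal) atTop
      (𝓝 ((α (Set.Iic s)).toReal)))
    (hβs : β (Set.Iio 0) = 0) (hβf : ∀ s : ℝ, β (Set.Iic s) < ⊤)
    (hβns : ∀ n, βn n (Set.Iio 0) = 0) (hβnf : ∀ n, ∀ s : ℝ, βn n (Set.Iic s) < ⊤)
    (hβcv : ∀ s : ℝ, Tendsto (fun n => (βn n (Set.Iic s)).toReal) atTop
      (𝓝 ((β (Set.Iic s)).toReal))) (t : ℝ) :
    Tendsto (fun n => (mconv (αn n) (βn n) (Set.Iic t)).toReal) atTop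
      (𝓝 ((mconv α β (Set.Iic t)).toReal)) := by
  rcases lt_or_ge t 0 with ht | ht
  · have hsub : Set.Iic t ⊆ Set.Iio 0 := fun z hz => lt_of_le_of_lt hz ht
    have h1 : (fun n => (mconv (αn n) (βn n) (Set.Iic t)).toReal) = fun _ => (0:ℝ) :=
      funext fun n => by
        rw [measure_mono_null hsub (mconv_supp _ _ (hαns n) (hβns n) (hαnf n) (hβnf n))]
        simp
    rw [h1, measure_mono_null hsub (mconv_supp _ _ hαs hβs hαf hβf)]
    simp only [ENNReal.toReal_zero]
    exact tendsto_const_nhds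
  set f : ℝ → ℝ := fun y => (α (Set.Iic (t - y))).toReal with hf
  have hfc : Continuous f := hG.comp (continuous_const.sub continuous_id)
  have hfa : Antitone f := fun y y' hyy =>
    ENNReal.toReal_mono (hαf _).ne (measure_mono (Set.Iic_subset_Iic.2 (by linarith)))
  have hf0 : ∀ y, 0 ≤ f y := fun y => ENNReal.toReal_nonneg
  have hfz : ∀ y, t ≤ y → f y = 0 := by
    intro y hy
    have : α (Set.Iic (t - y)) = 0 :=
      measure_mono_null (Set.Iic_subset_Iic.2 (by linarith)) hα0
    rw [hf]; simp only [this, ENNReal.toReal_zero]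
  have hI := conv_integrand_tendsto t ht f hfc hfa hf0 hfz β βn hβs hβns hβf hβnf hβcv
  have hIH : (∫⁻ y, ENNReal.ofReal (f y) ∂β) = mconv α β (Set.Iic t) := by
    rw [mconv_apply α β hαf hβf]
    exact lintegral_congr fun y => by rw [hf, ENNReal.ofReal_toReal (hαf _).ne]
  have hMono : ∀ n, Monotone (fun s => (αn n (Set.Iic s)).toReal) := fun n a b hab =>
    ENNReal.toReal_mono (hαnf n b).ne (measure_mono (Set.Iic_subset_Iic.2 hab))
  have hTU := polya_Icc (fun n s => (αn n (Set.Iic s)).toReal) _ hMono hG hαcv 0 t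
  rw [Metric.tendstoUniformlyOn_iff] at hTU
  rw [Metric.tendsto_atTop]
  intro ε hε
  set C := (β (Set.Iic t)).toReal + 1 with hC
  have hC0 : 0 < C := by positivity
  set ε₁ := ε / (3 * C) with hε₁
  have hε₁0 : 0 < ε₁ := by positivity
  obtain ⟨N1, hN1⟩ := eventually_atTop.1 (hTU ε₁ hε₁0)
  obtain ⟨N2, hN2⟩ := Metric.tendsto_atTop.1 hI (ε/3) (by positivity)
  obtain ⟨N3, hN3⟩ := Metric.tendsto_atTop.1 (hβcv t) 1 one_pos
  refine ⟨max (max N1 N2) N3, fun n hn => ?_⟩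
  have hn1 := hN1 n (le_trans (le_trans (le_max_left _ _) (le_max_left _ _)) hn)
  have hn2 := hN2 n (le_trans (le_trans (le_max_right _ _) (le_max_left _ _)) hn)
  have hn3 := hN3 n (le_trans (le_max_right _ _) hn)
  rw [Real.dist_eq, abs_lt] at hn2 hn3
  have hBn : (βn n (Set.Iic t)).toReal ≤ C := by rw [hC]; linarith [hn3.2]
  -- Step A: two-sided bound between H_n and I_n
  have hae : ∀ᵐ y ∂(βn n), (0:ℝ) ≤ y := by
    rw [ae_iff]
    convert hβns n using 2
    ext y; simp
  have hup : ∀ᵐ y ∂(βn n), αn n (Set.Iic (t - y)) ≤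
      ENNReal.ofReal (f y) + (Set.Iic t).indicator (fun _ => ENNReal.ofReal ε₁) y := by
    filter_upwards [hae] with y hy
    by_cases hyt : y ≤ t
    · have hs : t - y ∈ Set.Icc 0 t := ⟨by linarith, by linarith⟩
      have hd := hn1 (t - y) hs
      rw [Real.dist_eq, abs_lt] at hd
      calc αn n (Set.Iic (t - y))
          = ENNReal.ofReal ((αn n (Set.Iic (t - y))).toReal) :=
            (ENNReal.ofReal_toReal (hαnf n _).ne).symm
        _ ≤ ENNReal.ofReal (f y + ε₁) := ENNReal.ofReal_le_ofReal (by
            have : f y = (α (Set.Iic (t - y))).toReal := rfl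
            linarith [hd.1, hd.2])
        _ ≤ ENNReal.ofReal (f y) + ENNReal.ofReal ε₁ := ENNReal.ofReal_add_le
        _ = ENNReal.ofReal (f y) + (Set.Iic t).indicator (fun _ => ENNReal.ofReal ε₁) y := by
            rw [Set.indicator_of_mem (Set.mem_Iic.2 hyt)]
    · push_neg at hyt
      have hz : αn n (Set.Iic (t - y)) = 0 :=
        measure_mono_null (fun z hz => by
          simp only [Set.mem_Iic] at hz
          simp only [Set.mem_Iio]; linarith) (hαns n)
      rw [hz]
      exact zero_le
  have hdown : ∀ᵐ y ∂(βn n), ENNReal.ofReal (f y) ≤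
      αn n (Set.Iic (t - y)) + (Set.Iic t).indicator (fun _ => ENNReal.ofReal ε₁) y := by
    filter_upwards [hae] with y hy
    by_cases hyt : y ≤ t
    · have hs : t - y ∈ Set.Icc 0 t := ⟨by linarith, by linarith⟩
      have hd := hn1 (t - y) hs
      rw [Real.dist_eq, abs_lt] at hd
      calc ENNReal.ofReal (f y)
          ≤ ENNReal.ofReal ((αn n (Set.Iic (t - y))).toReal + ε₁) :=
            ENNReal.ofReal_le_ofReal (by
              have : f y = (α (Set.Iic (t - y))).toReal := rfl
              linarith [hd.1, hd.2])
        _ ≤ ENNReal.ofReal ((αn n (Set.Iic (t - y))).toReal) + ENNReal.ofReal ε₁ :=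
            ENNReal.ofReal_add_le
        _ = αn n (Set.Iic (t - y)) + ENNReal.ofReal ε₁ := by
            rw [ENNReal.ofReal_toReal (hαnf n _).ne]
        _ = αn n (Set.Iic (t - y)) + (Set.Iic t).indicator (fun _ => ENNReal.ofReal ε₁) y := by
            rw [Set.indicator_of_mem (Set.mem_Iic.2 hyt)]
    · rw [hfz y (by linarith)]
      simp
  have hind : ∫⁻ y, (Set.Iic t).indicator (fun _ => ENNReal.ofReal ε₁) y ∂(βn n)
      = ENNReal.ofReal ε₁ * βn n (Set.Iic t) := by
    rw [lintegral_indicator measurableSet_Iic, setLIntegral_const]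
  have hA1 : mconv (αn n) (βn n) (Set.Iic t) ≤
      (∫⁻ y, ENNReal.ofReal (f y) ∂(βn n)) + ENNReal.ofReal ε₁ * βn n (Set.Iic t) := by
    rw [mconv_apply _ _ (hαnf n) (hβnf n)]
    calc ∫⁻ y, αn n (Set.Iic (t - y)) ∂(βn n)
        ≤ ∫⁻ y, (ENNReal.ofReal (f y)
            + (Set.Iic t).indicator (fun _ => ENNReal.ofReal ε₁) y) ∂(βn n) :=
          lintegral_mono_ae hup
      _ = _ := by
          rw [lintegral_add_right _ (measurable_const.indicator measurableSet_Iic), hind]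
  have hA2 : (∫⁻ y, ENNReal.ofReal (f y) ∂(βn n)) ≤
      mconv (αn n) (βn n) (Set.Iic t) + ENNReal.ofReal ε₁ * βn n (Set.Iic t) := by
    rw [mconv_apply _ _ (hαnf n) (hβnf n)]
    calc ∫⁻ y, ENNReal.ofReal (f y) ∂(βn n)
        ≤ ∫⁻ y, (αn n (Set.Iic (t - y))
            + (Set.Iic t).indicator (fun _ => ENNReal.ofReal ε₁) y) ∂(βn n) :=
          lintegral_mono_ae hdown
      _ = _ := by
          rw [lintegral_add_right _ (measurable_const.indicator measurableSet_Iic), hind]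
  -- finiteness and passage to reals
  have hmfin : mconv (αn n) (βn n) (Set.Iic t) ≠ ⊤ :=
    (mconv_fin _ _ (hαns n) (hβns n) (hαnf n) (hβnf n) t).ne
  have hcfin : ENNReal.ofReal ε₁ * βn n (Set.Iic t) ≠ ⊤ :=
    ENNReal.mul_ne_top ENNReal.ofReal_ne_top (hβnf n t).ne
  have hIfin : (∫⁻ y, ENNReal.ofReal (f y) ∂(βn n)) ≠ ⊤ :=
    ne_top_of_le_ne_top (ENNReal.add_ne_top.2 ⟨hmfin, hcfin⟩) hA2
  have hA1' := ENNReal.toReal_mono (ENNReal.add_ne_top.2 ⟨hIfin, hcfin⟩) hA1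
  have hA2' := ENNReal.toReal_mono (ENNReal.add_ne_top.2 ⟨hmfin, hcfin⟩) hA2
  rw [ENNReal.toReal_add hIfin hcfin, ENNReal.toReal_mul,
    ENNReal.toReal_ofReal hε₁0.le] at hA1'
  rw [ENNReal.toReal_add hmfin hcfin, ENNReal.toReal_mul,
    ENNReal.toReal_ofReal hε₁0.le] at hA2'
  have hε₁C : ε₁ * C = ε/3 := by
    rw [hε₁]; field_simp
  have hε₁Bn : ε₁ * (βn n (Set.Iic t)).toReal ≤ ε/3 := by
    rw [← hε₁C]
    exact mul_le_mul_of_nonneg_left hBn hε₁0.le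
  clear_value ε₁ C
  rw [Real.dist_eq, abs_lt, ← hIH]
  constructor <;> [linarith [hn2.1, hn2.2]; linarith [hn2.1, hn2.2]]


lemma mconvPow_one (m : Measure ℝ) : mconvPow m 1 = m := rfl

/-- let `Z : [0,∞) → [0,∞)` be nondecreasing and continuous with `Z(0)=0`
(represented by `Z u = μ (Iic u)`). Then every `Z^{*(j)}` is continuous on `[0,∞)`; and if
`c_n ↑ ∞` and nondecreasing `X_n` (represented by `X_n u = ν_n (Iic u)`) satisfy
`X_n/c_n → Z` uniformly on compacts of `[0,∞)`, then `X_n^{*(j)}/c_n^j → Z^{*(j)}`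
uniformly on compacts of `[0,∞)`, for each `j ≥ 1`. -/
theorem stmt19 (Z : ℝ → ℝ) (μ : MeasureTheory.Measure ℝ)
    (hsupp : μ (Set.Iio 0) = 0) (hfin : ∀ t : ℝ, μ (Set.Iic t) < ⊤)
    (hrep : ∀ t : ℝ, Z t = (μ (Set.Iic t)).toReal)
    (hZ0 : Z 0 = 0) (hZcont : ContinuousOn Z (Set.Ici 0))
    (c : ℕ → ℝ) (hcpos : ∀ n, 0 < c n) (hc : Tendsto c atTop atTop)
    (X : ℕ → ℝ → ℝ) (ν : ℕ → MeasureTheory.Measure ℝ)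
    (hνsupp : ∀ n, ν n (Set.Iio 0) = 0) (hνfin : ∀ n, ∀ t : ℝ, ν n (Set.Iic t) < ⊤)
    (hXrep : ∀ n, ∀ t : ℝ, X n t = (ν n (Set.Iic t)).toReal)
    (hconv : TendstoLocallyUniformlyOn (fun n u => X n u / c n) Z atTop (Set.Ici 0)) :
    ∀ j : ℕ, 1 ≤ j →
      ContinuousOn (convFun μ j) (Set.Ici 0) ∧
      TendstoLocallyUniformlyOn (fun n u => convFun (ν n) j u / (c n) ^ j)
        (convFun μ j) atTop (Set.Ici 0) := by
  -- basic facts about μ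
  have hμ0 : μ (Set.Iic 0) = 0 := by
    have h0 : (μ (Set.Iic 0)).toReal = 0 := by rw [← hrep, hZ0]
    rcases (ENNReal.toReal_eq_zero_iff _).1 h0 with h | h
    · exact h
    · exact absurd h (hfin 0).ne
  have hGneg : ∀ s : ℝ, s ≤ 0 → μ (Set.Iic s) = 0 := fun s hs =>
    measure_mono_null (Set.Iic_subset_Iic.2 hs) hμ0
  have hGμ : Continuous fun s => (μ (Set.Iic s)).toReal := by
    rw [continuous_iff_continuousAt]
    intro x
    rcases lt_trichotomy x 0 with hx | hx | hx
    · have heq : (fun s => (μ (Set.Iic s)).toReal) =ᶠ[𝓝 x] fun _ => (0:ℝ) := by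
        filter_upwards [Iio_mem_nhds hx] with s hs
        rw [hGneg s (le_of_lt hs)]; simp
      exact continuousAt_const.congr heq.symm
    · subst hx
      have h1 : ContinuousWithinAt (fun s => (μ (Set.Iic s)).toReal) (Set.Iic 0) 0 := by
        have hconst : ContinuousWithinAt (fun _ : ℝ => (0:ℝ)) (Set.Iic 0) 0 :=
          continuousWithinAt_const
        refine hconst.congr ?_ ?_
        · intro y hy
          rw [hGneg y hy]; simp
        · rw [hGneg 0 le_rfl]; simp
      have h2 : ContinuousWithinAt (fun s => (μ (Set.Iic s)).toReal) (Set.Ici 0) 0 := by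
        refine (hZcont 0 Set.self_mem_Ici).congr ?_ ?_
        · intro y _; exact (hrep y).symm
        · exact (hrep 0).symm
      have h3 := h1.union h2
      rw [Set.Iic_union_Ici] at h3
      exact continuousWithinAt_univ _ _ |>.1 h3
    · have heq : (fun s => (μ (Set.Iic s)).toReal) =ᶠ[𝓝 x] Z := by
        filter_upwards with s
        exact (hrep s).symm
      have hZat : ContinuousAt Z x :=
        hZcont.continuousAt (mem_of_superset (Ioi_mem_nhds hx) Set.Ioi_subset_Ici_self)
      exact hZat.congr heq.symm
  -- the rescaled measures
  set κ : ℕ → Measure ℝ := fun n => (ENNReal.ofReal (c n))⁻¹ • ν n with hκ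
  have hinv_ne_top : ∀ n, (ENNReal.ofReal (c n))⁻¹ ≠ ⊤ :=
    fun n => ENNReal.inv_ne_top.2 (ENNReal.ofReal_pos.2 (hcpos n)).ne'
  have hκs : ∀ n, κ n (Set.Iio 0) = 0 := by
    intro n
    rw [hκ]
    simp [Measure.smul_apply, hνsupp n]
  have hκf : ∀ n, ∀ s : ℝ, κ n (Set.Iic s) < ⊤ := by
    intro n s
    rw [hκ]
    simp only [Measure.smul_apply, smul_eq_mul]
    exact ENNReal.mul_lt_top (hinv_ne_top n).lt_top (hνfin n s)
  have hκtoReal : ∀ n, ∀ s : ℝ, (κ n (Set.Iic s)).toReal = X n s / c n := by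
    intro n s
    rw [hκ]
    simp only [Measure.smul_apply, smul_eq_mul]
    rw [ENNReal.toReal_mul, ENNReal.toReal_inv, ENNReal.toReal_ofReal (hcpos n).le,
      ← hXrep n s, inv_mul_eq_div]
  have hκcv : ∀ s : ℝ, Tendsto (fun n => (κ n (Set.Iic s)).toReal) atTop
      (𝓝 ((μ (Set.Iic s)).toReal)) := by
    intro s
    rcases lt_or_ge s 0 with hs | hs
    · have h1 : (fun n => (κ n (Set.Iic s)).toReal) = fun _ => (0:ℝ) := by
        funext n
        rw [measure_mono_null (show Set.Iic s ⊆ Set.Iio 0 from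
          fun z hz => lt_of_le_of_lt hz hs) (hκs n)]
        simp
      rw [h1, measure_mono_null (show Set.Iic s ⊆ Set.Iio 0 from
        fun z hz => lt_of_le_of_lt hz hs) hsupp]
      simp only [ENNReal.toReal_zero]
      exact tendsto_const_nhds
    · have h1 : (fun n => (κ n (Set.Iic s)).toReal) = fun n => X n s / c n :=
        funext fun n => hκtoReal n s
      rw [h1, ← hrep s]
      exact hconv.tendsto_at hs
  -- per-level facts for ν (unscaled)
  have hνlevel : ∀ n, ∀ j : ℕ, 1 ≤ j →
      (mconvPow (ν n) j (Set.Iio 0) = 0 ∧ ∀ t : ℝ, mconvPow (ν n) j (Set.Iic t) < ⊤) := by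
    intro n
    refine Nat.le_induction ⟨by rw [mconvPow_one]; exact hνsupp n,
      fun t => by rw [mconvPow_one]; exact hνfin n t⟩ ?_
    intro j hj ih
    rw [mconvPow_succ _ j hj]
    exact ⟨mconv_supp _ _ (hνsupp n) ih.1 (hνfin n) ih.2,
      fun t => mconv_fin _ _ (hνsupp n) ih.1 (hνfin n) ih.2 t⟩
  -- main induction
  have main : ∀ j : ℕ, 1 ≤ j →
      (mconvPow μ j (Set.Iio 0) = 0 ∧ (∀ s : ℝ, mconvPow μ j (Set.Iic s) < ⊤) ∧
        Continuous (fun s => (mconvPow μ j (Set.Iic s)).toReal)) ∧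
      (∀ n, mconvPow (κ n) j (Set.Iio 0) = 0) ∧
      (∀ n, ∀ s : ℝ, mconvPow (κ n) j (Set.Iic s) < ⊤) ∧
      (∀ s : ℝ, Tendsto (fun n => (mconvPow (κ n) j (Set.Iic s)).toReal) atTop
        (𝓝 ((mconvPow μ j (Set.Iic s)).toReal))) := by
    refine Nat.le_induction ?_ ?_
    · simp only [mconvPow_one]
      exact ⟨⟨hsupp, hfin, hGμ⟩, hκs, hκf, hκcv⟩
    · intro j hj ih
      obtain ⟨⟨hjs, hjf, hjc⟩, hjns, hjnf, hjcv⟩ := ih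
      simp only [mconvPow_succ _ j hj]
      refine ⟨⟨?_, ?_, ?_⟩, ?_, ?_, ?_⟩
      · exact mconv_supp _ _ hsupp hjs hfin hjf
      · exact fun s => mconv_fin _ _ hsupp hjs hfin hjf s
      · exact conv_cont _ _ hsupp hfin hjs hjf hGμ
      · exact fun n => mconv_supp _ _ (hκs n) (hjns n) (hκf n) (hjnf n)
      · exact fun n s => mconv_fin _ _ (hκs n) (hjns n) (hκf n) (hjnf n) s
      · exact fun s => conv_df_tendsto μ (mconvPow μ j) κ (fun n => mconvPow (κ n) j)
          hsupp hfin hμ0 hGμ hκs hκf hκcv hjs hjf hjns hjnf hjcv s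
  intro j hj
  obtain ⟨⟨hjs, hjf, hjc⟩, hjns, hjnf, hjcv⟩ := main j hj
  constructor
  · exact hjc.continuousOn
  · have hfe : (fun n u => convFun (ν n) j u / c n ^ j)
        = fun n u => (mconvPow (κ n) j (Set.Iic u)).toReal := by
      funext n u
      have hsm := mconvPow_smul (ν n) ((ENNReal.ofReal (c n))⁻¹) (hinv_ne_top n)
        (hνfin n) (fun j' hj' t => (hνlevel n j' hj').2 t) j hj
      rw [hκ]
      simp only []
      rw [hsm, Measure.smul_apply, smul_eq_mul, ENNReal.toReal_mul, ENNReal.toReal_pow,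
        ENNReal.toReal_inv, ENNReal.toReal_ofReal (hcpos n).le]
      rw [convFun, div_eq_mul_inv, ← inv_pow, mul_comm]
    rw [hfe]
    have hmono : ∀ n, Monotone (fun u => (mconvPow (κ n) j (Set.Iic u)).toReal) :=
      fun n a b hab => ENNReal.toReal_mono (hjnf n b).ne
        (measure_mono (Set.Iic_subset_Iic.2 hab))
    exact (polya_loc _ _ hmono hjc hjcv).tendstoLocallyUniformlyOn
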